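/- Let Ω be a finite set, let μ : Ω → ℝ be a nonnegative function, let S ⊆ Ω, and let A : Ω → 𝒜 and pe : Ω → ℰ be functions into arbitrary types. Let c > 0 and suppose f : S → S satisfies, for every L ∈ S: f(f(L)) = L, A(f(L)) = A(L), pe(f(L)) ≠ pe(L), and μ(f(L)) ≥ c · μ(L). Then for every a ∈ 𝒜 and every e ∈ ℰ, Σ_{L ∈ S with A(L) = a and pe(L) = e} μ(L) ≤ (1/(1+c)) · Σ_{L ∈ S with A(L) = a} μ(L). -/
import Mathlib

theorem stmt12 {Ω 𝒜 ℰ : Type*} [Fintype Ω] [DecidableEq 𝒜] [DecidableEq ℰ]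
    (μ : Ω → ℝ) (hμ : ∀ x, 0 ≤ μ x) (S : Finset Ω)
    (A : Ω → 𝒜) (pe : Ω → ℰ) (c : ℝ) (hc : 0 < c)
    (f : Ω → Ω) (hfS : ∀ L ∈ S, f L ∈ S)
    (hff : ∀ L ∈ S, f (f L) = L)
    (hfA : ∀ L ∈ S, A (f L) = A L)
    (hfpe : ∀ L ∈ S, pe (f L) ≠ pe L)
    (hfμ : ∀ L ∈ S, c * μ L ≤ μ (f L))
    (a : 𝒜) (e : ℰ) :
    ∑ L ∈ S.filter (fun L => A L = a ∧ pe L = e), μ L ≤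
      (1 / (1 + c)) * ∑ L ∈ S.filter (fun L => A L = a), μ L := by
  classical
  set T := S.filter (fun L => A L = a ∧ pe L = e) with hT
  set U := S.filter (fun L => A L = a) with hU
  have hTS : ∀ L ∈ T, L ∈ S := fun L hL => (Finset.mem_filter.mp hL).1
  have hTU : T ⊆ U := by
    intro L hL
    obtain ⟨hLS, hA, _⟩ := Finset.mem_filter.mp hL
    exact Finset.mem_filter.mpr ⟨hLS, hA⟩
  have hinj : Set.InjOn f T := by
    intro x hx y hy hxy
    have := hff x (hTS x (by simpa using hx))
    rw [hxy, hff y (hTS y (by simpa using hy))] at this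
    exact this.symm
  have himg : T.image f ⊆ U := by
    intro y hy
    obtain ⟨x, hx, rfl⟩ := Finset.mem_image.mp hy
    have hxS := hTS x hx
    exact Finset.mem_filter.mpr ⟨hfS x hxS, by
      rw [hfA x hxS]; exact (Finset.mem_filter.mp hx).2.1⟩
  have hdisj : Disjoint T (T.image f) := by
    rw [Finset.disjoint_left]
    intro y hyT hyI
    obtain ⟨x, hx, rfl⟩ := Finset.mem_image.mp hyI
    have hxS := hTS x hx
    exact hfpe x hxS (by
      rw [(Finset.mem_filter.mp hyT).2.2, (Finset.mem_filter.mp hx).2.2])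
  have hsum : ∑ L ∈ T, μ L + ∑ L ∈ T.image f, μ L ≤ ∑ L ∈ U, μ L := by
    rw [← Finset.sum_union hdisj]
    exact Finset.sum_le_sum_of_subset_of_nonneg
      (Finset.union_subset hTU himg) (fun i _ _ => hμ i)
  have himgsum : c * ∑ L ∈ T, μ L ≤ ∑ L ∈ T.image f, μ L := by
    rw [Finset.sum_image (fun x hx y hy => hinj (by simpa using hx) (by simpa using hy)),
      Finset.mul_sum]
    exact Finset.sum_le_sum fun i hi => hfμ i (hTS i hi)
  have h1c : 0 < 1 + c := by linarith
  rw [div_mul_eq_mul_div, le_div_iff₀ h1c]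
  nlinarith [hsum, himgsum]
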